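/- Let 𝒯 be a k-linear Hom-finite (d+2)-angulated category with split idempotents and Serre functor, and T ∈ 𝒯 satisfying condition (b) (as in the Setup). Then the functor 𝒯(T,−) : 𝒯 → mod Γ is full. -/

import Mathlib

noncomputable section
open CategoryTheory CategoryTheory.Limits

/-- `Ext^i_R(A,B)` vanishes. -/
def ExtVanish (R : Type) [Ring R] (A B : ModuleCat R) (i : ℕ) : Prop :=
  Subsingleton (((Ext ℤ (ModuleCat R) i).obj (Opposite.op A)).obj B)

variable (k : Type) [Field k]
variable (𝒯 : Type) [Category.{0} 𝒯] [Preadditive 𝒯]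

/-- The category is Hom-finite over `k`. -/
def HomFinite [CategoryTheory.Linear k 𝒯] : Prop :=
  ∀ X Y : 𝒯, FiniteDimensional k (X ⟶ Y)

/-- The right `End T`-module structure (by precomposition) on `T ⟶ X`. -/
instance endOppositeModule (T X : 𝒯) : Module (End T)ᵐᵒᵖ (T ⟶ X) where
  smul m a := m.unop ≫ a
  one_smul a := Category.id_comp a
  mul_smul m n a := by
    show (n.unop * m.unop) ≫ a = m.unop ≫ n.unop ≫ a
    show (m.unop ≫ n.unop) ≫ a = _
    simp
  smul_zero m := Limits.comp_zero
  smul_add m a b := Preadditive.comp_add _ _ _ _ _ _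
  add_smul m n a := Preadditive.add_comp _ _ _ _ _ _
  zero_smul a := Limits.zero_comp

/-- The `Γ`-linear map `𝒯(T,X) → 𝒯(T,Y)` induced by postcomposition with `f : X ⟶ Y`. -/
def postcompHom (T : 𝒯) {X Y : 𝒯} (f : X ⟶ Y) :
    (T ⟶ X) →ₗ[(End T)ᵐᵒᵖ] (T ⟶ Y) where
  toFun a := a ≫ f
  map_add' a b := Preadditive.add_comp _ _ _ _ _ _
  map_smul' m a := by
    show (m.unop ≫ a) ≫ f = m.unop ≫ (a ≫ f)
    simp

/-- The image of `X` under the functor `𝒯(T,-) : 𝒯 → Mod (End T)ᵐᵒᵖ`. -/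
def homMod (T X : 𝒯) : ModuleCat (End T)ᵐᵒᵖ := ModuleCat.of _ (T ⟶ X)

/-- Membership in `add T`: direct summand of a finite direct sum of copies of `T`. -/
def InAdd [HasFiniteBiproducts 𝒯] (T X : 𝒯) : Prop :=
  ∃ (n : ℕ) (s : X ⟶ biproduct (fun _ : Fin n => T))
    (r : biproduct (fun _ : Fin n => T) ⟶ X), s ≫ r = 𝟙 X

/-- `X` is indecomposable. -/
def Indecomposable' (X : 𝒯) : Prop :=
  ¬ Limits.IsZero X ∧ ∀ e : X ⟶ X, e ≫ e = e → e = 0 ∨ e = 𝟙 X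

/-- The functor `𝒯(T,-)` is full onto `Γ`-linear maps. -/
def HomFunctorFull (T : 𝒯) : Prop :=
  ∀ (X Y : 𝒯) (φ : (T ⟶ X) →ₗ[(End T)ᵐᵒᵖ] (T ⟶ Y)), ∃ g : X ⟶ Y, ∀ a, φ a = a ≫ g

/-- The essential image of `𝒯(T,-)` in `mod (End T)ᵐᵒᵖ`. -/
def EssIm (T : 𝒯) : Set (ModuleCat (End T)ᵐᵒᵖ) :=
  {M | ∃ X : 𝒯, Nonempty (M ≅ homMod 𝒯 T X)}

/-- A Serre functor: an autoequivalence `S` with binatural isomorphisms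
`𝒯(Y, SX) ≅ D 𝒯(X,Y)`. -/
structure SerreData [CategoryTheory.Linear k 𝒯] where
  S : 𝒯 ⥤ 𝒯
  equiv : S.IsEquivalence
  ε : ∀ X Y : 𝒯, (Y ⟶ S.obj X) ≃ₗ[k] Module.Dual k (X ⟶ Y)
  nat_left : ∀ {X Y Y' : 𝒯} (g : Y ⟶ Y') (h : Y' ⟶ S.obj X) (f : X ⟶ Y),
    ε X Y (g ≫ h) f = ε X Y' h (f ≫ g)
  nat_right : ∀ {X X' Y : 𝒯} (u : X ⟶ X') (h : Y ⟶ S.obj X) (f : X' ⟶ Y),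
    ε X' Y (h ≫ S.map u) f = ε X Y h (u ≫ f)

/-- A candidate `(d+2)`-angle `X₀ → X₁ → ⋯ → X_{d+1} → Σᵈ X₀`. -/
structure Candidate (Sd : 𝒯 ⥤ 𝒯) (d : ℕ) where
  obj : ℕ → 𝒯
  hom : ∀ n, obj n ⟶ obj (n + 1)
  conn : obj (d + 1) ⟶ Sd.obj (obj 0)

/-- A `(d+2)`-angulated structure on `𝒯`: an auto-equivalence `Σᵈ` together with a
class of `(d+2)`-angles satisfying (part of) the Geiss–Keller–Oppermann axioms. -/
structure Angulation (d : ℕ) where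
  shift : 𝒯 ⥤ 𝒯
  equiv : shift.IsEquivalence
  IsAngle : Candidate 𝒯 shift d → Prop
  comp_zero : ∀ C, IsAngle C → ∀ n, n + 1 ≤ d → C.hom n ≫ C.hom (n + 1) = 0
  conn_zero : ∀ C, IsAngle C → C.hom d ≫ C.conn = 0
  exists_angle : ∀ {A B : 𝒯} (f : A ⟶ B), ∃ C, IsAngle C ∧
    ∃ (eA : C.obj 0 ≅ A) (eB : C.obj 1 ≅ B), C.hom 0 = eA.hom ≫ f ≫ eB.inv
  hom_exact : ∀ C, IsAngle C → ∀ (W : 𝒯) (n : ℕ), n + 1 ≤ d →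
    Function.Exact (fun a : W ⟶ C.obj n => a ≫ C.hom n)
      (fun a : W ⟶ C.obj (n + 1) => a ≫ C.hom (n + 1))
  hom_exact_last : ∀ C, IsAngle C → ∀ W : 𝒯,
    Function.Exact (fun a : W ⟶ C.obj d => a ≫ C.hom d)
      (fun a : W ⟶ C.obj (d + 1) => a ≫ C.conn)

/-- Condition (b) of the paper. -/
def CondB [HasFiniteBiproducts 𝒯] {d : ℕ} (A : Angulation 𝒯 d) (T : 𝒯) : Prop :=
  ∀ X : 𝒯, Indecomposable' 𝒯 X → (∃ a : T ⟶ X, a ≠ 0) →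
    ∃ C, A.IsAngle C ∧ (∀ i, i ≤ d → InAdd 𝒯 T (C.obj i)) ∧
      Nonempty (C.obj (d + 1) ≅ X) ∧ ∀ a : T ⟶ C.obj (d + 1), a ≫ C.conn = 0

namespace CondBAux

/-- A linear functional vanishing on the kernel of `v` factors through `v`. -/
lemma dual_factor {K V V' : Type} [Field K] [AddCommGroup V] [Module K V]
    [AddCommGroup V'] [Module K V']
    (v : V →ₗ[K] V') (α : V →ₗ[K] K) (h : ∀ x, v x = 0 → α x = 0) :
    ∃ β : V' →ₗ[K] K, ∀ x, β (v x) = α x := by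
  have hker : LinearMap.ker v ≤ LinearMap.ker α := fun x hx => h x hx
  obtain ⟨β, hβ⟩ := LinearMap.exists_extend
    (((LinearMap.ker v).liftQ α hker).comp v.quotKerEquivRange.symm.toLinearMap)
  refine ⟨β, fun x => ?_⟩
  have h1 : β (v x) = (((LinearMap.ker v).liftQ α hker).comp
      v.quotKerEquivRange.symm.toLinearMap) ⟨v x, LinearMap.mem_range_self v x⟩ := by
    conv_lhs => rw [show v x = (LinearMap.range v).subtype
      ⟨v x, LinearMap.mem_range_self v x⟩ from rfl]
    rw [← LinearMap.comp_apply, hβ]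
  rw [h1]
  simp only [LinearMap.comp_apply, LinearEquiv.coe_toLinearMap]
  rw [v.quotKerEquivRange_symm_apply_image x (LinearMap.mem_range_self v x)]
  simp [Submodule.liftQ_apply]

variable {k : Type} [Field k]
variable {𝒯 : Type} [Category.{0} 𝒯] [Preadditive 𝒯]

section KLinear
variable [CategoryTheory.Linear k 𝒯]

/-- `k`-linear postcomposition. -/
def postL (W : 𝒯) {X Y : 𝒯} (f : X ⟶ Y) : (W ⟶ X) →ₗ[k] (W ⟶ Y) where
  toFun a := a ≫ f
  map_add' a b := Preadditive.add_comp _ _ _ _ _ _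
  map_smul' r a := by simp [CategoryTheory.Linear.smul_comp]

/-- Factorization through a cokernel-like map, via Serre duality. -/
lemma factor_exists (SD : SerreData k 𝒯) {A B C Y : 𝒯} (f : A ⟶ B) (g : B ⟶ C)
    (hex : ∀ W : 𝒯, Function.Exact (fun a : W ⟶ A => a ≫ f) (fun a : W ⟶ B => a ≫ g))
    (g₀ : B ⟶ Y) (h0 : f ≫ g₀ = 0) : ∃ h : C ⟶ Y, g ≫ h = g₀ := by
  haveI := SD.equiv
  set W := SD.S.objPreimage Y with hW
  set η : SD.S.obj W ≅ Y := SD.S.objObjPreimageIso Y with hη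
  set θ : B ⟶ SD.S.obj W := g₀ ≫ η.inv with hθ
  set α : Module.Dual k (W ⟶ B) := SD.ε W B θ with hα
  have hker : ∀ x : W ⟶ B, (postL (k := k) W g) x = 0 → α x = 0 := by
    intro x hx
    obtain ⟨b, hb⟩ := (hex W x).mp hx
    have hn := SD.nat_left f θ b
    have hfθ : f ≫ θ = 0 := by
      rw [hθ, ← Category.assoc, h0, Limits.zero_comp]
    rw [hα, ← hb, ← hn, hfθ, map_zero]
    rfl
  obtain ⟨β, hβ⟩ := dual_factor (postL (k := k) W g) α hker
  set h₀ : C ⟶ SD.S.obj W := (SD.ε W C).symm β with hh₀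
  refine ⟨h₀ ≫ η.hom, ?_⟩
  have key : g ≫ h₀ = θ := by
    apply (SD.ε W B).injective
    apply LinearMap.ext; intro b
    rw [SD.nat_left g h₀ b]
    have hε : SD.ε W C h₀ = β := (SD.ε W C).apply_symm_apply β
    rw [hε]
    exact (hβ b).trans rfl
  rw [← Category.assoc, key, hθ, Category.assoc, Iso.inv_hom_id, Category.comp_id]

end KLinear

section AddT
variable [HasFiniteBiproducts 𝒯]

omit [HasFiniteBiproducts 𝒯] in
lemma postcomp_apply (T : 𝒯) {X Y : 𝒯} (f : X ⟶ Y) (a : T ⟶ X) :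
    postcompHom 𝒯 T f a = a ≫ f := rfl

omit [HasFiniteBiproducts 𝒯] in
lemma gamma_comp {T X Y : 𝒯} (φ : (T ⟶ X) →ₗ[(End T)ᵐᵒᵖ] (T ⟶ Y)) (c : T ⟶ T)
    (b : T ⟶ X) : φ (c ≫ b) = c ≫ φ b :=
  φ.map_smul (MulOpposite.op (c : End T)) b

/-- Any `Γ`-linear map out of `𝒯(T,M)` with `M ∈ add T` is induced by a morphism. -/
lemma realize {T M Y : 𝒯} (hM : InAdd 𝒯 T M)
    (ψ : (T ⟶ M) →ₗ[(End T)ᵐᵒᵖ] (T ⟶ Y)) : ∃ g : M ⟶ Y, ∀ a, ψ a = a ≫ g := by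
  obtain ⟨n, s, r, hsr⟩ := hM
  set P := fun i : Fin n => biproduct.π (fun _ : Fin n => T) i
  set I := fun i : Fin n => biproduct.ι (fun _ : Fin n => T) i
  refine ⟨s ≫ biproduct.desc (fun i => ψ (I i ≫ r)), fun a => ?_⟩
  have hx : a ≫ s = ∑ i, (a ≫ s ≫ P i) ≫ I i := by
    calc a ≫ s = (a ≫ s) ≫ 𝟙 _ := (Category.comp_id _).symm
    _ = (a ≫ s) ≫ ∑ i, P i ≫ I i := by rw [biproduct.total]
    _ = ∑ i, (a ≫ s ≫ P i) ≫ I i := by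
        rw [Preadditive.comp_sum]; simp [Category.assoc]
  have h1 : a = ∑ i, (a ≫ s ≫ P i) ≫ (I i ≫ r) := by
    calc a = (a ≫ s) ≫ r := by rw [Category.assoc, hsr, Category.comp_id]
    _ = (∑ i, (a ≫ s ≫ P i) ≫ I i) ≫ r := by rw [hx]
    _ = ∑ i, (a ≫ s ≫ P i) ≫ (I i ≫ r) := by
        rw [Preadditive.sum_comp]; simp [Category.assoc]
  have h2 : ∀ i : Fin n, ψ ((a ≫ s ≫ P i) ≫ (I i ≫ r))
      = (a ≫ s ≫ P i) ≫ ψ (I i ≫ r) := fun i => gamma_comp ψ _ _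
  calc ψ a = ψ (∑ i, (a ≫ s ≫ P i) ≫ (I i ≫ r)) := by rw [← h1]
  _ = ∑ i, ψ ((a ≫ s ≫ P i) ≫ (I i ≫ r)) := map_sum ψ _ _
  _ = ∑ i, (a ≫ s ≫ P i) ≫ ψ (I i ≫ r) := Finset.sum_congr rfl (fun i _ => h2 i)
  _ = ∑ i, (a ≫ s ≫ P i) ≫ (I i ≫ biproduct.desc (fun j => ψ (I j ≫ r))) := by
      simp [I, biproduct.ι_desc]
  _ = (∑ i, (a ≫ s ≫ P i) ≫ I i) ≫ biproduct.desc (fun j => ψ (I j ≫ r)) := by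
      rw [Preadditive.sum_comp]; simp [Category.assoc]
  _ = (a ≫ s) ≫ biproduct.desc (fun j => ψ (I j ≫ r)) := by rw [← hx]
  _ = a ≫ s ≫ biproduct.desc (fun j => ψ (I j ≫ r)) := Category.assoc _ _ _

/-- A morphism out of `M ∈ add T` killed by all maps from `T` is zero. -/
lemma zerotest {T M Z : 𝒯} (hM : InAdd 𝒯 T M) (f : M ⟶ Z)
    (h : ∀ a : T ⟶ M, a ≫ f = 0) : f = 0 := by
  obtain ⟨n, s, r, hsr⟩ := hM
  have hr : r ≫ f = 0 := by
    apply biproduct.hom_ext'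
    intro i
    rw [← Category.assoc, h (biproduct.ι (fun _ : Fin n => T) i ≫ r),
      Limits.comp_zero]
  calc f = (s ≫ r) ≫ f := by rw [hsr, Category.id_comp]
  _ = s ≫ (r ≫ f) := Category.assoc _ _ _
  _ = 0 := by rw [hr, Limits.comp_zero]

end AddT

end CondBAux

/-- If `T` satisfies condition (b), then `𝒯(T,-) : 𝒯 → mod Γ` is a full functor. -/
theorem homFunctor_full_of_condB
    (k 𝒯 : Type) [Field k] [IsAlgClosed k] [Category.{0} 𝒯] [Preadditive 𝒯]
    [CategoryTheory.Linear k 𝒯] [HasFiniteBiproducts 𝒯] [IsIdempotentComplete 𝒯]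
    (d : ℕ) (hd : 1 ≤ d) (hfin : HomFinite k 𝒯) (SD : SerreData k 𝒯)
    (A : Angulation 𝒯 d) (T : 𝒯) (hb : CondB 𝒯 A T) :
    HomFunctorFull 𝒯 T := by
  obtain ⟨m, rfl⟩ : ∃ m, d = m + 1 := ⟨d - 1, (Nat.succ_pred_eq_of_pos hd).symm⟩
  have key : ∀ (N : ℕ) (X : 𝒯), Module.finrank k (X ⟶ X) ≤ N →
      ∀ (Y : 𝒯) (φ : (T ⟶ X) →ₗ[(End T)ᵐᵒᵖ] (T ⟶ Y)), ∃ g : X ⟶ Y, ∀ a, φ a = a ≫ g := by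
    intro N
    induction N with
    | zero =>
      intro X hX Y φ
      haveI := hfin X X
      have h0 : (𝟙 X : X ⟶ X) = 0 := by
        have hfr : Module.finrank k (X ⟶ X) = 0 := le_antisymm hX (Nat.zero_le _)
        have hs : Subsingleton (X ⟶ X) := Module.finrank_zero_iff.mp hfr
        exact Subsingleton.elim _ _
      refine ⟨0, fun a => ?_⟩
      have ha : a = 0 := by rw [← Category.comp_id a, h0, Limits.comp_zero]
      rw [ha, map_zero, Limits.zero_comp]
    | succ N ih =>
      intro X hX Y φ
      by_cases hzero : Limits.IsZero X
      · refine ⟨0, fun a => ?_⟩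
        have ha : a = 0 := by
          rw [← Category.comp_id a, hzero.eq_of_src (𝟙 X) 0, Limits.comp_zero]
        rw [ha, map_zero, Limits.zero_comp]
      by_cases hind : Indecomposable' 𝒯 X
      · by_cases hnz : ∃ a : T ⟶ X, a ≠ 0
        · -- the main case, using condition (b)
          obtain ⟨C, hC, hadd, ⟨u⟩, hconn⟩ := hb X hind hnz
          have hg₀ := CondBAux.realize (hadd (m + 1) le_rfl)
            ((φ.comp (postcompHom 𝒯 T u.hom)).comp (postcompHom 𝒯 T (C.hom (m + 1))))
          obtain ⟨g₀, hg₀⟩ := hg₀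
          have hz : C.hom m ≫ g₀ = 0 := by
            apply CondBAux.zerotest (hadd m (Nat.le_succ m))
            intro a
            rw [← Category.assoc, ← hg₀ (a ≫ C.hom m)]
            simp only [LinearMap.comp_apply, CondBAux.postcomp_apply, Category.assoc]
            have hcz : a ≫ C.hom m ≫ C.hom (m + 1) ≫ u.hom = 0 := by
              calc a ≫ C.hom m ≫ C.hom (m + 1) ≫ u.hom
                  = a ≫ (C.hom m ≫ C.hom (m + 1)) ≫ u.hom := by
                    simp only [Category.assoc]
              _ = 0 := by
                    rw [A.comp_zero C hC m le_rfl, Limits.zero_comp, Limits.comp_zero]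
            rw [hcz, map_zero]
          obtain ⟨h, hh⟩ := CondBAux.factor_exists SD (C.hom m) (C.hom (m + 1))
            (fun W => A.hom_exact C hC W m le_rfl) g₀ hz
          refine ⟨u.inv ≫ h, fun a => ?_⟩
          obtain ⟨b, hb'⟩ := (A.hom_exact_last C hC T (a ≫ u.inv)).mp (hconn (a ≫ u.inv))
          have hb'' : b ≫ C.hom (m + 1) = a ≫ u.inv := hb'
          calc φ a = φ ((a ≫ u.inv) ≫ u.hom) := by
                rw [Category.assoc, Iso.inv_hom_id, Category.comp_id]
          _ = φ ((b ≫ C.hom (m + 1)) ≫ u.hom) := by rw [hb'']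
          _ = b ≫ g₀ := hg₀ b
          _ = b ≫ C.hom (m + 1) ≫ h := by rw [hh]
          _ = (b ≫ C.hom (m + 1)) ≫ h := (Category.assoc _ _ _).symm
          _ = (a ≫ u.inv) ≫ h := by rw [hb'']
          _ = a ≫ u.inv ≫ h := Category.assoc _ _ _
        · push_neg at hnz
          refine ⟨0, fun a => ?_⟩
          rw [hnz a, map_zero, Limits.zero_comp]
      · -- X decomposes; split an idempotent and use the inductive hypothesis
        obtain ⟨e, hee, he0, he1⟩ : ∃ e : X ⟶ X, e ≫ e = e ∧ e ≠ 0 ∧ e ≠ 𝟙 X := by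
          unfold Indecomposable' at hind
          push_neg at hind
          obtain ⟨e, h1, h2, h3⟩ := hind hzero
          exact ⟨e, h1, h2, h3⟩
        have hee' : (𝟙 X - e) ≫ (𝟙 X - e) = 𝟙 X - e := by
          simp only [Preadditive.sub_comp, Preadditive.comp_sub, Category.id_comp,
            Category.comp_id, hee]
          abel
        obtain ⟨X₁, i₁, r₁, hir₁, hri₁⟩ := IsIdempotentComplete.idempotents_split X e hee
        obtain ⟨X₂, i₂, r₂, hir₂, hri₂⟩ :=
          IsIdempotentComplete.idempotents_split X (𝟙 X - e) hee'
        have hrank : ∀ (Z : 𝒯) (i : Z ⟶ X) (r : X ⟶ Z), i ≫ r = 𝟙 Z → r ≫ i ≠ 𝟙 X →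
            Module.finrank k (Z ⟶ Z) ≤ N := by
          intro Z i r hir hri
          haveI := hfin X X
          haveI := hfin Z Z
          let Φ : (Z ⟶ Z) →ₗ[k] (X ⟶ X) :=
            { toFun := fun f => r ≫ f ≫ i
              map_add' := fun f g => by
                simp [Preadditive.comp_add, Preadditive.add_comp]
              map_smul' := fun c f => by
                simp [CategoryTheory.Linear.comp_smul, CategoryTheory.Linear.smul_comp] }
          have hkey : ∀ f : Z ⟶ Z, i ≫ (r ≫ f ≫ i) ≫ r = f := by
            intro f
            calc i ≫ (r ≫ f ≫ i) ≫ r = (i ≫ r) ≫ f ≫ (i ≫ r) := by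
                  simp only [Category.assoc]
            _ = f := by rw [hir, Category.id_comp, Category.comp_id]
          have hΦinj : Function.Injective Φ := by
            intro f g hfg
            rw [← hkey f, ← hkey g]
            show i ≫ Φ f ≫ r = i ≫ Φ g ≫ r
            rw [hfg]
          have hne : LinearMap.range Φ ≠ ⊤ := by
            intro htop
            have hmem : 𝟙 X ∈ LinearMap.range Φ := htop ▸ Submodule.mem_top
            obtain ⟨f, hf⟩ := hmem
            apply hri
            have hf' : r ≫ f ≫ i = 𝟙 X := hf
            have h2 : (r ≫ i) ≫ (r ≫ f ≫ i) = r ≫ f ≫ i := by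
              calc (r ≫ i) ≫ (r ≫ f ≫ i) = r ≫ (i ≫ r) ≫ f ≫ i := by
                    simp only [Category.assoc]
              _ = r ≫ f ≫ i := by rw [hir, Category.id_comp]
            rw [hf', Category.comp_id] at h2
            exact h2
          have h1 : Module.finrank k (Z ⟶ Z) = Module.finrank k (LinearMap.range Φ) :=
            (LinearMap.finrank_range_of_inj hΦinj).symm
          have h2 : Module.finrank k (LinearMap.range Φ) < Module.finrank k (X ⟶ X) :=
            Submodule.finrank_lt hne
          omega
        have hb1 : Module.finrank k (X₁ ⟶ X₁) ≤ N := by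
          refine hrank X₁ i₁ r₁ hir₁ ?_
          rw [hri₁]; exact he1
        have hb2 : Module.finrank k (X₂ ⟶ X₂) ≤ N := by
          refine hrank X₂ i₂ r₂ hir₂ ?_
          rw [hri₂]
          intro hcon
          exact he0 (sub_eq_self.mp hcon)
        obtain ⟨g₁, hg₁⟩ := ih X₁ hb1 Y (φ.comp (postcompHom 𝒯 T i₁))
        obtain ⟨g₂, hg₂⟩ := ih X₂ hb2 Y (φ.comp (postcompHom 𝒯 T i₂))
        refine ⟨r₁ ≫ g₁ + r₂ ≫ g₂, fun a => ?_⟩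
        have h1 : φ ((a ≫ r₁) ≫ i₁) = (a ≫ r₁) ≫ g₁ := hg₁ (a ≫ r₁)
        have h2 : φ ((a ≫ r₂) ≫ i₂) = (a ≫ r₂) ≫ g₂ := hg₂ (a ≫ r₂)
        calc φ a = φ (a ≫ e) + φ (a ≫ (𝟙 X - e)) := by
              rw [← map_add, ← Preadditive.comp_add]
              simp
        _ = φ ((a ≫ r₁) ≫ i₁) + φ ((a ≫ r₂) ≫ i₂) := by
              rw [← hri₂, ← hri₁]
              simp [Category.assoc]
        _ = (a ≫ r₁) ≫ g₁ + (a ≫ r₂) ≫ g₂ := by rw [h1, h2]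
        _ = a ≫ (r₁ ≫ g₁ + r₂ ≫ g₂) := by
              simp [Preadditive.comp_add, Category.assoc]
  intro X Y φ
  exact key (Module.finrank k (X ⟶ X)) X le_rfl Y φ
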